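/- Let N ≥ 1 and D be natural numbers. Then the following two quantities (infima of sets of nonnegative reals) are equal: (i) the Kolmogorov width d_D(B₁ᴺ, ℓ∞ᴺ) := inf over all linear subspaces X ⊆ ℝᴺ with dim X ≤ D of sup over x ∈ ℝᴺ with ∑_{i=1}^N |x_i| ≤ 1 of inf over y ∈ X of max_{1≤i≤N} |x_i − y_i|; and (ii) the best rank-D max-norm approximation of the identity, inf over all real N×N matrices W with rank W ≤ D of max_{1≤s,s'≤N} |δ_{s,s'} − W_{s,s'}|, where δ_{s,s'} is the Kronecker delta. -/

import Mathlib

/-- **Kolmogorov-width identity.** The Kolmogorov width `d_D(B₁ᴺ, ℓ∞ᴺ)` — the infimum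
over linear subspaces `X ⊆ ℝᴺ` of dimension at most `D` of the supremum over the unit
`ℓ₁`-ball of the `ℓ∞`-distance to `X` — equals the best approximation of the identity
matrix by rank-`≤ D` matrices in the entrywise max norm. -/
theorem stmt_10 (N D : ℕ) (hN : 1 ≤ N) :
    (⨅ X : {X : Submodule ℝ (Fin N → ℝ) // Module.finrank ℝ ↥X ≤ D},
      ⨆ x : {x : Fin N → ℝ // ∑ i : Fin N, |x i| ≤ 1},
        ⨅ y : ↥X.1, ⨆ i : Fin N, |x.1 i - (y : Fin N → ℝ) i|)
    = ⨅ W : {W : Matrix (Fin N) (Fin N) ℝ // W.rank ≤ D},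
        ⨆ s : Fin N, ⨆ s' : Fin N,
          |(if s = s' then (1 : ℝ) else 0) - W.1 s s'| := by
  have hNe : Nonempty (Fin N) := ⟨⟨0, hN⟩⟩
  have i0 : Fin N := ⟨0, hN⟩
  -- generic facts
  have hba : ∀ (f : Fin N → ℝ), BddAbove (Set.range f) :=
    fun f => (Set.finite_range f).bddAbove
  have hsup_nonneg : ∀ (x y : Fin N → ℝ), 0 ≤ ⨆ i : Fin N, |x i - y i| :=
    fun x y => Real.iSup_nonneg fun i => abs_nonneg _
  -- the inner infimum over y is nonneg
  have hGnonneg : ∀ (X : Submodule ℝ (Fin N → ℝ)) (x : Fin N → ℝ),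
      0 ≤ ⨅ y : ↥X, ⨆ i : Fin N, |x i - (y : Fin N → ℝ) i| :=
    fun X x => le_ciInf fun y => hsup_nonneg _ _
  -- the inner infimum is at most 1 on the ball
  have hGle1 : ∀ (X : Submodule ℝ (Fin N → ℝ)) (x : Fin N → ℝ), (∑ i : Fin N, |x i| ≤ 1) →
      (⨅ y : ↥X, ⨆ i : Fin N, |x i - (y : Fin N → ℝ) i|) ≤ 1 := by
    intro X x hx
    refine ciInf_le_of_le ⟨0, fun v ⟨y, hy⟩ => hy ▸ hsup_nonneg _ _⟩ (0 : ↥X) ?_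
    refine ciSup_le fun i => ?_
    simp only [Submodule.coe_zero, Pi.zero_apply, sub_zero]
    exact le_trans (Finset.single_le_sum (fun j _ => abs_nonneg (x j)) (Finset.mem_univ i)) hx
  -- the outer sup over ball is bounded above
  have hFbdd : ∀ (X : Submodule ℝ (Fin N → ℝ)),
      BddAbove (Set.range fun x : {x : Fin N → ℝ // ∑ i : Fin N, |x i| ≤ 1} =>
        ⨅ y : ↥X, ⨆ i : Fin N, |x.1 i - (y : Fin N → ℝ) i|) := by
    intro X
    exact ⟨1, fun v ⟨x, hx⟩ => hx ▸ hGle1 X x.1 x.2⟩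
  -- RHS values are nonneg
  have hRnonneg : ∀ (W : Matrix (Fin N) (Fin N) ℝ),
      0 ≤ ⨆ s : Fin N, ⨆ s' : Fin N, |(if s = s' then (1 : ℝ) else 0) - W s s'| :=
    fun W => Real.iSup_nonneg fun s => Real.iSup_nonneg fun s' => abs_nonneg _
  -- zero vector lies in the ball
  have hball0 : (∑ i : Fin N, |(0 : Fin N → ℝ) i|) ≤ 1 := by simp
  haveI : Nonempty {x : Fin N → ℝ // ∑ i : Fin N, |x i| ≤ 1} := ⟨⟨0, hball0⟩⟩
  haveI : Nonempty {W : Matrix (Fin N) (Fin N) ℝ // W.rank ≤ D} :=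
    ⟨⟨0, by simp [Matrix.rank_zero]⟩⟩
  haveI : Nonempty {X : Submodule ℝ (Fin N → ℝ) // Module.finrank ℝ ↥X ≤ D} :=
    ⟨⟨⊥, by simp⟩⟩
  refine le_antisymm (le_ciInf fun W => ?_) (le_ciInf fun X => ?_)
  · -- LHS ≤ R W
    set r := ⨆ s : Fin N, ⨆ s' : Fin N, |(if s = s' then (1 : ℝ) else 0) - W.1 s s'| with hr
    have hrnn : 0 ≤ r := hRnonneg W.1
    have hentry : ∀ s s', |(if s = s' then (1 : ℝ) else 0) - W.1 s s'| ≤ r := by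
      intro s s'
      refine le_trans (le_ciSup (f := fun j => |(if s = j then (1:ℝ) else 0) - W.1 s j|)
        (hba _) s') ?_
      exact le_ciSup (f := fun u => ⨆ s' : Fin N, |(if u = s' then (1:ℝ) else 0) - W.1 u s'|)
        (Set.Finite.bddAbove (Set.finite_range _)) s
    -- row space
    set XW : Submodule ℝ (Fin N → ℝ) := Submodule.span ℝ (Set.range W.1) with hXW
    have hdim : Module.finrank ℝ ↥XW ≤ D := by
      exact le_trans (le_of_eq (Matrix.rank_eq_finrank_span_row W.1).symm) W.2
    refine ciInf_le_of_le ⟨0, fun v ⟨X, hX⟩ => hX ▸ Real.iSup_nonneg fun x => hGnonneg _ _⟩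
      ⟨XW, hdim⟩ ?_
    refine ciSup_le fun x => ?_
    -- approximate x by y = ∑ s, x s • (row s)
    have hymem : (∑ s : Fin N, x.1 s • W.1 s) ∈ XW :=
      Submodule.sum_mem _ fun s _ =>
        Submodule.smul_mem _ _ (Submodule.subset_span (Set.mem_range_self s))
    refine ciInf_le_of_le ⟨0, fun v ⟨y, hy⟩ => hy ▸ hsup_nonneg _ _⟩ ⟨_, hymem⟩ ?_
    refine ciSup_le fun i => ?_
    have hxi : x.1 i = ∑ s : Fin N, x.1 s * (if s = i then (1:ℝ) else 0) := by
      simp [mul_ite]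
    have hyi : (∑ s : Fin N, x.1 s • W.1 s) i = ∑ s : Fin N, x.1 s * W.1 s i := by
      simp
    calc |x.1 i - (∑ s : Fin N, x.1 s • W.1 s) i|
        = |∑ s : Fin N, x.1 s * ((if s = i then (1:ℝ) else 0) - W.1 s i)| := by
          rw [hyi]; congr 1
          rw [hxi, ← Finset.sum_sub_distrib]
          exact Finset.sum_congr rfl fun s _ => by ring
      _ ≤ ∑ s : Fin N, |x.1 s * ((if s = i then (1:ℝ) else 0) - W.1 s i)| :=
          Finset.abs_sum_le_sum_abs _ _
      _ ≤ ∑ s : Fin N, |x.1 s| * r := by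
          refine Finset.sum_le_sum fun s _ => ?_
          rw [abs_mul]
          exact mul_le_mul_of_nonneg_left (hentry s i) (abs_nonneg _)
      _ = (∑ s : Fin N, |x.1 s|) * r := by rw [Finset.sum_mul]
      _ ≤ 1 * r := mul_le_mul_of_nonneg_right x.2 hrnn
      _ = r := one_mul r
  · -- RHS ≤ F X
    set t := ⨆ x : {x : Fin N → ℝ // ∑ i : Fin N, |x i| ≤ 1},
        ⨅ y : ↥X.1, ⨆ i : Fin N, |x.1 i - (y : Fin N → ℝ) i| with ht
    refine le_of_forall_pos_le_add fun ε hε => ?_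
    -- for each basis vector find a good approximant in X
    have hex : ∀ s : Fin N, ∃ y : ↥X.1,
        (⨆ i : Fin N, |(if s = i then (1:ℝ) else 0) - (y : Fin N → ℝ) i|) < t + ε := by
      intro s
      have hsball : (∑ i : Fin N, |(if s = i then (1:ℝ) else 0)|) ≤ 1 := by
        simp [apply_ite (abs : ℝ → ℝ)]
      have h1 : (⨅ y : ↥X.1, ⨆ i : Fin N, |(if s = i then (1:ℝ) else 0) - (y : Fin N → ℝ) i|)
          ≤ t := le_ciSup (hFbdd X.1) (⟨fun i => if s = i then (1:ℝ) else 0, hsball⟩ :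
            {x : Fin N → ℝ // ∑ i : Fin N, |x i| ≤ 1})
      have h2 : (⨅ y : ↥X.1, ⨆ i : Fin N, |(if s = i then (1:ℝ) else 0) - (y : Fin N → ℝ) i|)
          < t + ε := lt_of_le_of_lt h1 (lt_add_of_pos_right t hε)
      exact exists_lt_of_ciInf_lt h2
    choose y hy using hex
    set W : Matrix (Fin N) (Fin N) ℝ := Matrix.of fun s i => (y s : Fin N → ℝ) i with hW
    have hrank : W.rank ≤ D := by
      rw [Matrix.rank_eq_finrank_span_row W]
      have hle : Submodule.span ℝ (Set.range W) ≤ X.1 := by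
        rw [Submodule.span_le]
        rintro v ⟨s, rfl⟩
        exact (y s).2
      exact le_trans (Submodule.finrank_mono hle) X.2
    refine ciInf_le_of_le ⟨0, fun v ⟨U, hU⟩ => hU ▸ hRnonneg U.1⟩ ⟨W, hrank⟩ ?_
    refine ciSup_le fun s => ?_
    refine ciSup_le fun s' => ?_
    exact le_of_lt (lt_of_le_of_lt
      (le_ciSup (f := fun i => |(if s = i then (1:ℝ) else 0) - (y s : Fin N → ℝ) i|)
        (hba _) s') (hy s))
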